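/- Let f_k : L^⊗k → L and f_{n−k+1} : L^⊗(n−k+1) → L be skew-symmetric multilinear maps. Then the map f : L^⊗n → L given by f(x₁,…,x_n) = Σ_σ (−1)^σ f_{n−k+1}(f_k(x_{σ(1)},…,x_{σ(k)}), x_{σ(k+1)},…,x_{σ(n)}), where σ runs over all (k, n−k)-unshuffles, is skew-symmetric. -/

import Mathlib

open scoped Classical

variable (R L : Type*) [Field R] [AddCommGroup L] [Module R L]

/-- The composition `f(x₁,…,x_n) = Σ_σ (−1)^σ f_{l+1}(f_p(x_{σ(1)},…,x_{σ(p)}),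
x_{σ(p+1)},…,x_{σ(n)})` summed over all `(p, l)`-unshuffles `σ` (here `n = p + l`). -/
noncomputable def unshuffleComp (p l : ℕ)
    (fp : MultilinearMap R (fun _ : Fin p => L) L)
    (fl : MultilinearMap R (fun _ : Fin (l + 1) => L) L)
    (x : Fin (p + l) → L) : L :=
  ∑ σ : Equiv.Perm (Fin (p + l)),
    if (∀ i j : Fin p, i < j → σ (Fin.castAdd l i) < σ (Fin.castAdd l j)) ∧
       (∀ i j : Fin l, i < j → σ (Fin.natAdd p i) < σ (Fin.natAdd p j)) then
      (Equiv.Perm.sign σ : ℤ) •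
        fl (Fin.cons (fp (fun i : Fin p => x (σ (Fin.castAdd l i))))
          (fun j : Fin l => x (σ (Fin.natAdd p j))))
    else 0

namespace UnshuffleAux

open Equiv

lemma units_int_mul_self (u : ℤˣ) : (u : ℤ) * (u : ℤ) = 1 := by
  rcases Int.units_eq_one_or u with h | h <;> simp [h]

variable {p l : ℕ}

/-- The "block" permutation of `Fin (p + l)` acting by `b.1` on the first block and by
`b.2` on the second block. -/
def blk (b : Perm (Fin p) × Perm (Fin l)) : Perm (Fin (p + l)) :=
  finSumFinEquiv.permCongr (Equiv.sumCongr b.1 b.2)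

lemma blk_castAdd (b : Perm (Fin p) × Perm (Fin l)) (i : Fin p) :
    blk b (Fin.castAdd l i) = Fin.castAdd l (b.1 i) := by
  simp [blk, Equiv.permCongr_apply]

lemma blk_natAdd (b : Perm (Fin p) × Perm (Fin l)) (j : Fin l) :
    blk b (Fin.natAdd p j) = Fin.natAdd p (b.2 j) := by
  simp [blk, Equiv.permCongr_apply]

lemma blk_one : blk (1 : Perm (Fin p) × Perm (Fin l)) = 1 := by
  ext x
  rcases h : finSumFinEquiv.symm x with i | j <;>
  · simp only [blk, Equiv.permCongr_apply, h, Prod.fst_one, Prod.snd_one]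
    rw [← h]
    simp

lemma blk_mul (b c : Perm (Fin p) × Perm (Fin l)) :
    blk b * blk c = blk (b * c) := by
  ext x
  rcases h : finSumFinEquiv.symm x with i | j <;>
    simp [blk, Equiv.permCongr_apply, Equiv.Perm.mul_apply, h]

lemma sign_blk (b : Perm (Fin p) × Perm (Fin l)) :
    Equiv.Perm.sign (blk b) = Equiv.Perm.sign b.1 * Equiv.Perm.sign b.2 := by
  simp [blk, Equiv.Perm.sign_permCongr, Equiv.Perm.sign_sumCongr]

set_option linter.deprecated false in
lemma perm_eq_one_of_strictMono {n : ℕ} (σ : Perm (Fin n)) (h : StrictMono (⇑σ)) : σ = 1 := by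
  have h2 : StrictMono (id : Fin n → Fin n) := strictMono_id
  have h3 : Set.range (⇑σ) = Set.range (id : Fin n → Fin n) := by
    rw [σ.surjective.range_eq, Set.range_id]
  have := (StrictMono.range_inj h h2).mp h3
  exact Equiv.ext fun x => congrFun this x

/-- The unshuffle condition. -/
abbrev cond (σ : Perm (Fin (p + l))) : Prop :=
  (∀ i j : Fin p, i < j → σ (Fin.castAdd l i) < σ (Fin.castAdd l j)) ∧
  (∀ i j : Fin l, i < j → σ (Fin.natAdd p i) < σ (Fin.natAdd p j))

lemma castAdd_injective : Function.Injective (Fin.castAdd l : Fin p → Fin (p + l)) :=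
  fun a b h => Fin.ext (by simpa using congrArg Fin.val h)

lemma natAdd_injective : Function.Injective (Fin.natAdd p : Fin l → Fin (p + l)) :=
  fun a b h => Fin.ext (by
    have := congrArg Fin.val h
    simpa using Nat.add_left_cancel this)

lemma exists_cond (σ : Perm (Fin (p + l))) : ∃ b, cond (σ * blk b) := by
  set f : Fin p → Fin (p + l) := fun i => σ (Fin.castAdd l i) with hf
  set g : Fin l → Fin (p + l) := fun j => σ (Fin.natAdd p j) with hg
  refine ⟨(Tuple.sort f, Tuple.sort g), ?_, ?_⟩
  · have hmono : Monotone (f ∘ Tuple.sort f) := Tuple.monotone_sort f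
    have hinj : Function.Injective (f ∘ Tuple.sort f) :=
      (σ.injective.comp castAdd_injective).comp (Tuple.sort f).injective
    have hsm : StrictMono (f ∘ Tuple.sort f) := hmono.strictMono_of_injective hinj
    intro i j hij
    have := hsm hij
    simpa [Equiv.Perm.mul_apply, blk_castAdd, hf] using this
  · have hmono : Monotone (g ∘ Tuple.sort g) := Tuple.monotone_sort g
    have hinj : Function.Injective (g ∘ Tuple.sort g) :=
      (σ.injective.comp natAdd_injective).comp (Tuple.sort g).injective
    have hsm : StrictMono (g ∘ Tuple.sort g) := hmono.strictMono_of_injective hinj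
    intro i j hij
    have := hsm hij
    simpa [Equiv.Perm.mul_apply, blk_natAdd, hg] using this

lemma cond_unique (σ : Perm (Fin (p + l))) (h : cond σ) (b : Perm (Fin p) × Perm (Fin l))
    (h' : cond (σ * blk b)) : b = 1 := by
  have hF : StrictMono (fun i => σ (Fin.castAdd l i)) := fun i j hij => h.1 i j hij
  have hG : StrictMono (fun j => σ (Fin.natAdd p j)) := fun i j hij => h.2 i j hij
  have h1 : StrictMono (⇑b.1) := by
    intro i j hij
    have := h'.1 i j hij
    simp only [Equiv.Perm.mul_apply, blk_castAdd] at this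
    exact hF.lt_iff_lt.mp this
  have h2 : StrictMono (⇑b.2) := by
    intro i j hij
    have := h'.2 i j hij
    simp only [Equiv.Perm.mul_apply, blk_natAdd] at this
    exact hG.lt_iff_lt.mp this
  exact Prod.ext (perm_eq_one_of_strictMono _ h1) (perm_eq_one_of_strictMono _ h2)

lemma existsUnique_cond (σ : Perm (Fin (p + l))) : ∃! b, cond (σ * blk b) := by
  obtain ⟨b, hb⟩ := exists_cond σ
  refine ⟨b, hb, fun c hc => ?_⟩
  have key : σ * blk c = (σ * blk b) * blk (b⁻¹ * c) := by
    rw [mul_assoc, blk_mul, mul_inv_cancel_left]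
  have hc' : cond ((σ * blk b) * blk (b⁻¹ * c)) := by rw [← key]; exact hc
  have h1 : b⁻¹ * c = 1 := cond_unique _ hb _ hc'
  exact (inv_mul_eq_one.mp h1).symm

/-- The right-coset setoid on permutations. -/
def sr : Setoid (Perm (Fin (p + l))) where
  r σ τ := ∃ b, τ = σ * blk b
  iseqv := by
    refine ⟨fun σ => ⟨1, by rw [blk_one, mul_one]⟩, ?_, ?_⟩
    · rintro σ τ ⟨b, hb⟩
      exact ⟨b⁻¹, by rw [hb, mul_assoc, blk_mul, mul_inv_cancel, blk_one, mul_one]⟩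
    · rintro σ τ υ ⟨b, hb⟩ ⟨c, hc⟩
      exact ⟨b * c, by rw [hc, hb, mul_assoc, blk_mul]⟩

lemma sum_unique_reps {M : Type*} [AddCommMonoid M]
    (g : Perm (Fin (p + l)) → M) (hg : ∀ σ b, g (σ * blk b) = g σ)
    (P : Perm (Fin (p + l)) → Prop) [DecidablePred P]
    (hP : ∀ σ, ∃! b, P (σ * blk b)) :
    ∑ σ : Perm (Fin (p + l)), (if P σ then g σ else 0)
      = ∑ q : Quotient (sr (p := p) (l := l)),
          Quotient.liftOn q g (fun σ τ h => by obtain ⟨b, hb⟩ := h; rw [hb, hg]) := by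
  rw [← Finset.sum_fiberwise_of_maps_to
    (g := fun σ => (Quotient.mk (sr (p := p) (l := l)) σ)) (fun σ _ => Finset.mem_univ _)]
  refine Finset.sum_congr rfl fun q _ => ?_
  obtain ⟨b, hb, hub⟩ := hP q.out
  set σ₀ := q.out * blk b with hσ₀
  have hq : Quotient.mk (sr (p := p) (l := l)) σ₀ = q := by
    conv_rhs => rw [← Quotient.out_eq q]
    exact Quot.sound ((sr (p := p) (l := l)).iseqv.symm ⟨b, rfl⟩)
  rw [Finset.sum_eq_single_of_mem σ₀
      (Finset.mem_filter.2 ⟨Finset.mem_univ _, hq⟩) ?_]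
  · rw [if_pos hb, hg]
    conv_rhs => rw [← Quotient.out_eq q]
    rfl
  · intro σ hσ hne
    rw [if_neg]
    intro hPσ
    apply hne
    have hmem : Quotient.mk (sr (p := p) (l := l)) σ = q := (Finset.mem_filter.1 hσ).2
    have hrel : (sr (p := p) (l := l)).r q.out σ :=
      Quotient.exact (by rw [hmem, Quotient.out_eq])
    obtain ⟨c, hc⟩ := hrel
    have hPc : P (q.out * blk c) := by rw [← hc]; exact hPσ
    have : c = b := hub c hPc
    rw [hc, this]

end UnshuffleAux

open UnshuffleAux Equiv

/-- If `f_p : L^⊗p → L` and `f_{l+1} : L^⊗(l+1) → L` are skew-symmetric multilinear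
maps, then their composition over `(p,l)`-unshuffles is skew-symmetric. -/
theorem unshuffleComp_skew (p l : ℕ)
    (fp : MultilinearMap R (fun _ : Fin p => L) L)
    (fl : MultilinearMap R (fun _ : Fin (l + 1) => L) L)
    (hfp : ∀ (σ : Equiv.Perm (Fin p)) (x : Fin p → L),
      fp (x ∘ σ) = (Equiv.Perm.sign σ : ℤ) • fp x)
    (hfl : ∀ (σ : Equiv.Perm (Fin (l + 1))) (x : Fin (l + 1) → L),
      fl (x ∘ σ) = (Equiv.Perm.sign σ : ℤ) • fl x)
    (π : Equiv.Perm (Fin (p + l))) (x : Fin (p + l) → L) :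
    unshuffleComp R L p l fp fl (x ∘ π)
      = (Equiv.Perm.sign π : ℤ) • unshuffleComp R L p l fp fl x := by
  -- the summand, as a function of the permutation
  set g : Perm (Fin (p + l)) → L := fun σ =>
    (Equiv.Perm.sign σ : ℤ) •
      fl (Fin.cons (fp (fun i : Fin p => x (σ (Fin.castAdd l i))))
        (fun j : Fin l => x (σ (Fin.natAdd p j)))) with hgdef
  -- zsmul in the distinguished slot of `fl`
  have flsmul : ∀ (c : ℤ) (a : L) (z : Fin l → L),
      fl (Fin.cons (c • a) z) = c • fl (Fin.cons a z) := by
    intro c a z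
    calc fl (Fin.cons (c • a) z) = fl (Function.update (Fin.cons a z) 0 (c • a)) := by
          rw [Fin.update_cons_zero]
      _ = c • fl (Function.update (Fin.cons a z) 0 a) :=
          map_zsmul (fl.toLinearMap (Fin.cons a z) 0) c a
      _ = c • fl (Fin.cons a z) := by rw [Fin.update_cons_zero]
  -- permuting the tail arguments of `fl`
  have fltail : ∀ (τ : Perm (Fin l)) (a : L) (z : Fin l → L),
      fl (Fin.cons a (z ∘ τ)) = (Equiv.Perm.sign τ : ℤ) • fl (Fin.cons a z) := by
    intro τ a z
    have hcomp : Fin.cons a (z ∘ τ)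
        = (Fin.cons a z : Fin (l + 1) → L) ∘ (Equiv.Perm.decomposeFin.symm (0, τ)) := by
      funext i
      refine Fin.cases ?_ (fun j => ?_) i
      · simp
      · simp [Equiv.Perm.decomposeFin_symm_apply_succ]
    rw [hcomp, hfl]
    simp
  -- invariance of g under right multiplication by block permutations
  have hg : ∀ σ b, g (σ * blk b) = g σ := by
    intro σ b
    have h1 : (fun i : Fin p => x ((σ * blk b) (Fin.castAdd l i)))
        = (fun i : Fin p => x (σ (Fin.castAdd l i))) ∘ b.1 := by
      funext i; simp [Equiv.Perm.mul_apply, blk_castAdd]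
    have h2 : (fun j : Fin l => x ((σ * blk b) (Fin.natAdd p j)))
        = (fun j : Fin l => x (σ (Fin.natAdd p j))) ∘ b.2 := by
      funext j; simp [Equiv.Perm.mul_apply, blk_natAdd]
    simp only [hgdef, h1, h2, hfp, flsmul, fltail, smul_smul]
    congr 1
    have hs : Equiv.Perm.sign (σ * blk b)
        = Equiv.Perm.sign σ * Equiv.Perm.sign b.1 * Equiv.Perm.sign b.2 := by
      rw [Equiv.Perm.sign_mul, sign_blk, mul_assoc]
    rw [hs]
    push_cast
    have hb1 := units_int_mul_self (Equiv.Perm.sign b.1)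
    have hb2 := units_int_mul_self (Equiv.Perm.sign b.2)
    set s0 := (Equiv.Perm.sign σ : ℤ)
    set s1 := (Equiv.Perm.sign b.1 : ℤ)
    set s2 := (Equiv.Perm.sign b.2 : ℤ)
    linear_combination (s0 * s2 * s2) * hb1 + s0 * hb2
  -- rewrite the left-hand side
  have step1 : unshuffleComp R L p l fp fl (x ∘ π)
      = (Equiv.Perm.sign π : ℤ) • ∑ σ : Perm (Fin (p + l)),
          (if cond (p := p) (l := l) σ then g (π * σ) else 0) := by
    rw [unshuffleComp, Finset.smul_sum]
    refine Finset.sum_congr rfl fun σ _ => ?_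
    by_cases h : cond (p := p) (l := l) σ
    · rw [if_pos h, if_pos h, hgdef]
      simp only [Function.comp_apply, ← Equiv.Perm.mul_apply]
      rw [smul_smul]
      congr 1
      have hs : Equiv.Perm.sign σ = Equiv.Perm.sign π * Equiv.Perm.sign (π * σ) := by
        rw [Equiv.Perm.sign_mul, ← mul_assoc, Int.units_mul_self, one_mul]
      conv_lhs => rw [hs]
      push_cast
      ring
    · rw [if_neg h, if_neg h, smul_zero]
  rw [step1]
  congr 1
  -- reindex by left multiplication by π
  have step2 : ∑ σ : Perm (Fin (p + l)), (if cond (p := p) (l := l) σ then g (π * σ) else 0)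
      = ∑ σ : Perm (Fin (p + l)), (if cond (p := p) (l := l) (π⁻¹ * σ) then g σ else 0) := by
    refine Fintype.sum_equiv (Equiv.mulLeft π) _ _ fun σ => ?_
    show _ = if cond (p := p) (l := l) (π⁻¹ * (π * σ)) then g (π * σ) else 0
    rw [inv_mul_cancel_left]
  rw [step2]
  have hP' : ∀ σ : Perm (Fin (p + l)), ∃! b, cond (p := p) (l := l) (π⁻¹ * (σ * blk b)) := by
    intro σ
    simpa only [← mul_assoc] using existsUnique_cond (π⁻¹ * σ)
  refine Eq.trans (sum_unique_reps g hg (fun σ => cond (p := p) (l := l) (π⁻¹ * σ)) hP')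
    (Eq.trans (sum_unique_reps g hg (cond (p := p) (l := l)) existsUnique_cond).symm ?_)
  rw [unshuffleComp]
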